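/- Let a < b be real numbers and let f : ℝ → ℝ be continuously differentiable on [a,b]. If f attains a global maximum over [a,b] at some interior point t* ∈ (a,b), then D^α_{*a} f(t*) ≥ 0 for all α ∈ (0,1). -/

import Mathlib

open Set MeasureTheory intervalIntegral Filter Topology

/-- The Caputo fractional derivative of order `α` with starting point `a`:
`D^α_{*a} f(t) = (1/Γ(1-α)) ∫_a^t (t-s)^(-α) f'(s) ds`. -/
noncomputable def caputoDeriv (a α : ℝ) (f : ℝ → ℝ) (t : ℝ) : ℝ :=
  (Real.Gamma (1 - α))⁻¹ * ∫ s in a..t, (t - s) ^ (-α) * deriv f s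

set_option maxHeartbeats 1000000 in
theorem caputo_nonneg_at_global_max (a b : ℝ) (hab : a < b) (f : ℝ → ℝ)
    (hf : ContDiffOn ℝ 1 f (Set.Icc a b))
    (tstar : ℝ) (htstar : tstar ∈ Set.Ioo a b)
    (hmax : ∀ t ∈ Set.Icc a b, f t ≤ f tstar) :
    ∀ α ∈ Set.Ioo (0 : ℝ) 1, 0 ≤ caputoDeriv a α f tstar := by
  rintro α ⟨hα0, hα1⟩
  obtain ⟨ht1, ht2⟩ := htstar
  set t := tstar with htdef
  set φ : ℝ → ℝ := derivWithin f (Set.Icc a b) with hφdef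
  have hφc : ContinuousOn φ (Set.Icc a b) :=
    hf.continuousOn_derivWithin (uniqueDiffOn_Icc hab) le_rfl
  have hdiff : DifferentiableOn ℝ f (Set.Icc a b) := hf.differentiableOn one_ne_zero
  have hderW : ∀ s ∈ Set.Icc a b, HasDerivWithinAt f (φ s) (Set.Icc a b) s :=
    fun s hs => (hdiff s hs).hasDerivWithinAt
  have hder : ∀ s ∈ Set.Ioo a b, HasDerivAt f (φ s) s := fun s hs =>
    (hderW s (Set.Ioo_subset_Icc_self hs)).hasDerivAt (Icc_mem_nhds hs.1 hs.2)
  have hdeq : ∀ s ∈ Set.Ioo a b, deriv f s = φ s := fun s hs => (hder s hs).deriv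
  obtain ⟨M, hM⟩ := isCompact_Icc.exists_bound_of_continuousOn hφc
  have hM0 : 0 ≤ M := le_trans (norm_nonneg _) (hM a (Set.left_mem_Icc.mpr hab.le))
  have htI : t ∈ Set.Icc a b := ⟨ht1.le, ht2.le⟩
  have hlip : ∀ y ∈ Set.Icc a b, |f y - f t| ≤ M * |y - t| := fun y hy =>
    Convex.norm_image_sub_le_of_norm_hasDerivWithin_le hderW hM (convex_Icc a b) htI hy
  have hg : ∀ s ∈ Set.Icc a b, f s - f t ≤ 0 := fun s hs => sub_nonpos.mpr (hmax s hs)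
  -- integrability of the full integrand on [a, t]
  have hrpow_int : ∀ x y : ℝ, IntervalIntegrable (fun s : ℝ => (t - s) ^ (-α))
      volume x y := by
    intro x y
    have h1 : IntervalIntegrable (fun u : ℝ => u ^ (-α)) volume (t - x) (t - y) :=
      intervalIntegral.intervalIntegrable_rpow' (by linarith)
    simpa using h1.comp_sub_left t
  have hmeas : Measurable (fun s : ℝ => (t - s) ^ (-α) * deriv f s) :=
    ((measurable_const.sub measurable_id).pow measurable_const).mul (measurable_deriv f)
  have hK : IntervalIntegrable (fun s => (t - s) ^ (-α) * deriv f s) volume a t := by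
    refine ((hrpow_int a t).const_mul M).mono_fun hmeas.aestronglyMeasurable ?_
    rw [Set.uIoc_of_le ht1.le]
    refine (ae_restrict_iff' measurableSet_Ioc).mpr (ae_of_all _ fun s hs => ?_)
    show ‖(t - s) ^ (-α) * deriv f s‖ ≤ ‖M * (t - s) ^ (-α)‖
    rcases eq_or_lt_of_le hs.2 with h | h
    · simp [h, Real.zero_rpow (neg_ne_zero.mpr hα0.ne')]
    · have hst : (0:ℝ) < t - s := by linarith
      have hsI : s ∈ Set.Ioo a b := ⟨hs.1, h.trans ht2⟩
      have h1 : ‖(t - s) ^ (-α) * deriv f s‖ = (t - s) ^ (-α) * |deriv f s| := by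
        rw [norm_mul, Real.norm_eq_abs, Real.norm_eq_abs,
          abs_of_nonneg (Real.rpow_nonneg hst.le _)]
      rw [h1, hdeq s hsI]
      have h2 : ‖M * (t - s) ^ (-α)‖ = M * (t - s) ^ (-α) := by
        rw [Real.norm_eq_abs, abs_of_nonneg (by positivity)]
      rw [h2, mul_comm (M) _]
      exact mul_le_mul_of_nonneg_left (hM s (Set.mem_Icc.mpr ⟨hsI.1.le, hsI.2.le⟩))
        (Real.rpow_nonneg hst.le _)
  -- the key bound for each ε
  have key : ∀ ε ∈ Set.Ioo (0:ℝ) (t - a),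
      -(M * ε ^ (1-α) + M / (1-α) * ε ^ (1-α)) ≤
        ∫ s in a..t, (t - s) ^ (-α) * deriv f s := by
    rintro ε ⟨hε0, hεt⟩
    set c := t - ε with hcdef
    have hac : a < c := by simp only [hcdef]; linarith
    have hct : c < t := by simp only [hcdef]; linarith
    have hcb : c < b := lt_trans hct ht2
    have hIc : IntervalIntegrable (fun s => (t - s) ^ (-α) * deriv f s) volume a c := by
      apply hK.mono_set
      rw [Set.uIcc_of_le hac.le, Set.uIcc_of_le ht1.le]
      exact Set.Icc_subset_Icc le_rfl hct.le
    have hIct : IntervalIntegrable (fun s => (t - s) ^ (-α) * deriv f s) volume c t := by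
      apply hK.mono_set
      rw [Set.uIcc_of_le hct.le, Set.uIcc_of_le ht1.le]
      exact Set.Icc_subset_Icc hac.le le_rfl
    have hsplit : (∫ s in a..c, (t - s) ^ (-α) * deriv f s)
        + (∫ s in c..t, (t - s) ^ (-α) * deriv f s)
        = ∫ s in a..t, (t - s) ^ (-α) * deriv f s :=
      intervalIntegral.integral_add_adjacent_intervals hIc hIct
    -- tail estimate
    have htail : -(M / (1-α) * ε ^ (1-α)) ≤ ∫ s in c..t, (t - s) ^ (-α) * deriv f s := by
      have hmono : ∀ x ∈ Set.Icc c t,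
          -(M * (t - x) ^ (-α)) ≤ (t - x) ^ (-α) * deriv f x := by
        intro x hx
        rcases eq_or_lt_of_le hx.2 with h | h
        · simp [h, Real.zero_rpow (neg_ne_zero.mpr hα0.ne')]
        · have hxI : x ∈ Set.Ioo a b := ⟨lt_of_lt_of_le hac hx.1, h.trans ht2⟩
          have hxt : (0:ℝ) < t - x := by linarith
          have hMx := hM x ⟨hxI.1.le, hxI.2.le⟩
          rw [Real.norm_eq_abs] at hMx
          have hb := (abs_le.mp hMx).1
          have h8 : (0:ℝ) ≤ (t - x) ^ (-α) := Real.rpow_nonneg hxt.le _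
          rw [hdeq x hxI]
          nlinarith [mul_le_mul_of_nonneg_left hb h8]
      have hint1 : IntervalIntegrable (fun x : ℝ => -(M * (t - x) ^ (-α))) volume c t :=
        ((hrpow_int c t).const_mul M).neg
      have := intervalIntegral.integral_mono_on hct.le hint1 hIct hmono
      have hval : (∫ x in c..t, -(M * (t - x) ^ (-α))) = -(M / (1-α) * ε ^ (1-α)) := by
        rw [intervalIntegral.integral_neg, intervalIntegral.integral_const_mul]
        have : (∫ x in c..t, (t - x) ^ (-α)) = ε ^ (1-α) / (1-α) := by
          rw [show (fun x : ℝ => (t - x) ^ (-α)) = (fun x : ℝ => ((fun u : ℝ => u ^ (-α)) (t - x))) from rfl,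
            intervalIntegral.integral_comp_sub_left (fun u : ℝ => u ^ (-α)) t]
          rw [sub_self, show t - c = ε by simp [hcdef]]
          rw [integral_rpow (Or.inl (by linarith))]
          rw [Real.zero_rpow (by linarith), show -α + 1 = 1 - α by ring]
          ring
        rw [this]; ring
      linarith [hval ▸ this]
    -- head estimate via a' → a
    have hhead : -(M * ε ^ (1-α)) ≤ ∫ s in a..c, (t - s) ^ (-α) * deriv f s := by
      have hinner : ∀ a' ∈ Set.Ioo a c,
          -(M * ε ^ (1-α)) - M * (t - a') ^ (-α) * (a' - a)
            ≤ ∫ s in a..c, (t - s) ^ (-α) * deriv f s := by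
        rintro a' ⟨ha1, ha2⟩
        have ha'b : a' < b := lt_trans (lt_trans ha2 hct) ht2
        have hIa : IntervalIntegrable (fun s => (t - s) ^ (-α) * deriv f s) volume a a' := by
          apply hK.mono_set
          rw [Set.uIcc_of_le ha1.le, Set.uIcc_of_le ht1.le]
          exact Set.Icc_subset_Icc le_rfl (by linarith)
        have hIac : IntervalIntegrable (fun s => (t - s) ^ (-α) * deriv f s) volume a' c := by
          apply hK.mono_set
          rw [Set.uIcc_of_le ha2.le, Set.uIcc_of_le ht1.le]
          exact Set.Icc_subset_Icc ha1.le hct.le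
        have hsplit2 : (∫ s in a..a', (t - s) ^ (-α) * deriv f s)
            + (∫ s in a'..c, (t - s) ^ (-α) * deriv f s)
            = ∫ s in a..c, (t - s) ^ (-α) * deriv f s :=
          intervalIntegral.integral_add_adjacent_intervals hIa hIac
        -- bound the small piece near a
        have hsmall : -(M * (t - a') ^ (-α) * (a' - a))
            ≤ ∫ s in a..a', (t - s) ^ (-α) * deriv f s := by
          have hbnd : ∀ x ∈ Set.uIoc a a',
              ‖(t - x) ^ (-α) * deriv f x‖ ≤ M * (t - a') ^ (-α) := by
            intro x hx
            rw [Set.uIoc_of_le ha1.le] at hx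
            have hxI : x ∈ Set.Ioo a b := ⟨hx.1, lt_of_le_of_lt hx.2 ha'b⟩
            have hxt : (0:ℝ) < t - x := by
              have : x ≤ a' := hx.2; have : a' < t := lt_trans ha2 hct; linarith [hx.2]
            rw [norm_mul, Real.norm_eq_abs, Real.norm_eq_abs,
              abs_of_nonneg (Real.rpow_nonneg hxt.le (-α)), hdeq x hxI]
            have h5 : (t - x) ^ (-α) ≤ (t - a') ^ (-α) :=
              Real.rpow_le_rpow_of_nonpos (by linarith [lt_trans ha2 hct]) (by linarith [hx.2])
                (by linarith)
            calc (t - x) ^ (-α) * |φ x| ≤ (t - a') ^ (-α) * M := by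
                  apply mul_le_mul h5 (hM x ⟨hxI.1.le, hxI.2.le⟩) (abs_nonneg _)
                    (Real.rpow_nonneg (by linarith [lt_trans ha2 hct]) _)
              _ = M * (t - a') ^ (-α) := mul_comm _ _
          have hb := intervalIntegral.norm_integral_le_of_norm_le_const hbnd
          rw [Real.norm_eq_abs] at hb
          have habs : |a' - a| = a' - a := abs_of_nonneg (by linarith)
          rw [habs] at hb
          linarith [(abs_le.mp hb).1]
        -- integration by parts on [a', c]
        have hmain : -(M * ε ^ (1-α)) ≤ ∫ s in a'..c, (t - s) ^ (-α) * deriv f s := by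
          have hsub : Set.uIcc a' c ⊆ Set.Ioo a b := by
            rw [Set.uIcc_of_le ha2.le]
            exact fun x hx => ⟨lt_of_lt_of_le ha1 hx.1, lt_of_le_of_lt hx.2 hcb⟩
          have hsubt : ∀ x ∈ Set.uIcc a' c, x < t := by
            rw [Set.uIcc_of_le ha2.le]; exact fun x hx => lt_of_le_of_lt hx.2 hct
          have hu : ∀ x ∈ Set.uIcc a' c,
              HasDerivAt (fun s : ℝ => (t - s) ^ (-α))
                ((-1) * (-α) * (t - x) ^ (-α - 1)) x := by
            intro x hx
            exact ((hasDerivAt_id x).const_sub t).rpow_const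
              (Or.inl (sub_ne_zero.mpr (hsubt x hx).ne'))
          have hv : ∀ x ∈ Set.uIcc a' c,
              HasDerivAt (fun s => f s - f t) (φ x) x := fun x hx =>
            (hder x (hsub hx)).sub_const _
          have hu'int : IntervalIntegrable (fun x : ℝ => (-1) * (-α) * (t - x) ^ (-α - 1))
              volume a' c := by
            apply ContinuousOn.intervalIntegrable
            apply ContinuousOn.mul continuousOn_const
            exact (continuousOn_const.sub continuousOn_id).rpow_const
              (fun x hx => Or.inl (sub_ne_zero.mpr (hsubt x hx).ne'))
          have hvint : IntervalIntegrable φ volume a' c :=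
            (hφc.mono (fun x hx => ⟨(hsub hx).1.le, (hsub hx).2.le⟩)).intervalIntegrable
          have parts := intervalIntegral.integral_mul_deriv_eq_deriv_mul hu hv hu'int hvint
          have hcongr : (∫ s in a'..c, (t - s) ^ (-α) * deriv f s)
              = ∫ s in a'..c, (t - s) ^ (-α) * φ s :=
            intervalIntegral.integral_congr (fun x hx => by rw [hdeq x (hsub hx)])
          -- middle integral is nonpositive... i.e. the subtracted term is ≥ 0
          have hmid : (∫ x in a'..c, ((-1) * (-α) * (t - x) ^ (-α - 1)) * (f x - f t)) ≤ 0 := by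
            have hnn : (0:ℝ) ≤ ∫ x in a'..c, -(((-1) * (-α) * (t - x) ^ (-α - 1)) * (f x - f t)) := by
              apply intervalIntegral.integral_nonneg ha2.le
              intro u hu
              have huI : u ∈ Set.uIcc a' c := by rw [Set.uIcc_of_le ha2.le]; exact hu
              have hut : (0:ℝ) < t - u := by have := hsubt u huI; linarith
              have hg' : f u - f t ≤ 0 := hg u ⟨(hsub huI).1.le, (hsub huI).2.le⟩
              have : ((-1) * (-α) * (t - u) ^ (-α - 1)) * (f u - f t) ≤ 0 := by
                apply mul_nonpos_of_nonneg_of_nonpos _ hg'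
                have : (0:ℝ) ≤ (t - u) ^ (-α - 1) := Real.rpow_nonneg hut.le _
                nlinarith
              linarith
            rw [intervalIntegral.integral_neg] at hnn
            linarith
          -- boundary at a'
          have hb1 : (0:ℝ) ≤ -((t - a') ^ (-α) * (f a' - f t)) := by
            have : f a' - f t ≤ 0 := hg a' ⟨ha1.le, ha'b.le⟩
            have h6 : (0:ℝ) ≤ (t - a') ^ (-α) :=
              Real.rpow_nonneg (by linarith [lt_trans ha2 hct]) _
            nlinarith
          -- boundary at c
          have hb2 : -(M * ε ^ (1-α)) ≤ (t - c) ^ (-α) * (f c - f t) := by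
            have htc : t - c = ε := by simp [hcdef]
            have hcI : c ∈ Set.Icc a b := ⟨hac.le, hcb.le⟩
            have h7 : |f c - f t| ≤ M * ε := by
              have h := hlip c hcI
              have habs2 : |c - t| = ε := by
                rw [abs_sub_comm, htc, abs_of_nonneg hε0.le]
              rwa [habs2] at h
            have h8 : -(M * ε) ≤ f c - f t := by
              have := (abs_le.mp h7).1; linarith
            have h9 : (0:ℝ) ≤ ε ^ (-α) := Real.rpow_nonneg hε0.le _
            have h10 : ε ^ (-α) * (-(M * ε)) ≤ ε ^ (-α) * (f c - f t) :=
              mul_le_mul_of_nonneg_left h8 h9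
            have h11 : ε ^ (-α) * (-(M * ε)) = -(M * ε ^ (1-α)) := by
              have : ε ^ (-α) * ε = ε ^ (1-α) := by
                rw [show (1:ℝ) - α = -α + 1 by ring, Real.rpow_add hε0, Real.rpow_one]
              nlinarith [this]
            rw [htc]
            linarith [h10, h11 ▸ h10]
          rw [hcongr, parts]
          linarith
        linarith [hsplit2, hsmall, hmain]
      -- take the limit a' → a⁺
      have hcont : ContinuousAt (fun a' : ℝ =>
          -(M * ε ^ (1-α)) - M * (t - a') ^ (-α) * (a' - a)) a := by
        have h1 : ContinuousAt (fun a' : ℝ => (t - a') ^ (-α)) a := by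
          have := Real.continuousAt_rpow_const (t - a) (-α) (Or.inl (sub_pos.mpr ht1).ne')
          exact this.comp (continuousAt_const.sub continuousAt_id)
        exact continuousAt_const.sub (((continuousAt_const.mul h1)).mul
          (continuousAt_id.sub continuousAt_const))
      have htendsto : Tendsto (fun a' : ℝ =>
          -(M * ε ^ (1-α)) - M * (t - a') ^ (-α) * (a' - a)) (𝓝[>] a)
          (𝓝 (-(M * ε ^ (1-α)))) := by
        refine Tendsto.mono_left ?_ nhdsWithin_le_nhds
        simpa using hcont.tendsto
      refine le_of_tendsto htendsto ?_
      filter_upwards [Ioo_mem_nhdsGT_of_mem (Set.mem_Ico.mpr ⟨le_rfl, hac⟩)] with a' ha'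
      exact hinner a' ha'
    linarith [hsplit, htail, hhead]
  -- take the limit ε → 0⁺
  have hI : 0 ≤ ∫ s in a..t, (t - s) ^ (-α) * deriv f s := by
    have h0 : Tendsto (fun ε : ℝ => ε ^ (1-α)) (𝓝 0) (𝓝 (0:ℝ)) := by
      have := (Real.continuousAt_rpow_const 0 (1-α) (Or.inr (by linarith))).tendsto
      rwa [Real.zero_rpow (by linarith : (1:ℝ) - α ≠ 0)] at this
    have htendsto : Tendsto (fun ε : ℝ => -(M * ε ^ (1-α) + M / (1-α) * ε ^ (1-α)))
        (𝓝[>] (0:ℝ)) (𝓝 0) := by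
      have h1 : Tendsto (fun ε : ℝ => -(M * ε ^ (1-α) + M / (1-α) * ε ^ (1-α))) (𝓝 0)
          (𝓝 (-(M * 0 + M / (1-α) * 0))) :=
        ((h0.const_mul M).add (h0.const_mul (M / (1-α)))).neg
      rw [show -(M * 0 + M / (1-α) * 0) = (0:ℝ) by ring] at h1
      exact h1.mono_left nhdsWithin_le_nhds
    refine le_of_tendsto htendsto ?_
    filter_upwards [Ioo_mem_nhdsGT_of_mem
      (Set.mem_Ico.mpr ⟨le_rfl, (by linarith : (0:ℝ) < t - a)⟩)] with ε hε
    exact key ε hε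
  unfold caputoDeriv
  have hΓ : 0 < Real.Gamma (1 - α) := Real.Gamma_pos_of_pos (by linarith)
  exact mul_nonneg (inv_nonneg.mpr hΓ.le) hI
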